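/- arXiv:1603.07406 — 3 statements merged into one kernel-verified Lean document; each statement's English description precedes it below -/
import Mathlib

section
/- Let C be a category, let U, V, W : ℝ ⥤ C be functors, and let e, f ≥ 0. If (Φ₁, Ψ₁) is an e-interleaving of U and V and (Φ₂, Ψ₂) is an f-interleaving of V and W, then the pair consisting of (Φ₂ whiskered by T_e) ∘ Φ₁ : U ⟶ W T_{e+f} and (Ψ₁ whiskered by T_f) ∘ Ψ₂ : W ⟶ U T_{e+f} is an (e+f)-interleaving of U and W. -/
open CategoryTheory CategoryTheory.Limits

noncomputable section

/-- Translation functor `T_e : a ↦ a + e` on `ℝ`, viewed as a preorder category. -/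
def Tr (e : ℝ) : ℝ ⥤ ℝ :=
  Monotone.functor (f := fun a : ℝ => a + e) (fun _ _ h => by dsimp only; linarith)

@[simp] theorem Tr_obj (e a : ℝ) : (Tr e).obj a = a + e := rfl

theorem Tr_comp (e f : ℝ) : Tr e ⋙ Tr f = Tr (e + f) :=
  CategoryTheory.Functor.ext (fun a => add_assoc a e f) (fun _ _ _ => Subsingleton.elim _ _)

/-- The canonical natural transformation `U σ_e : U ⟶ U T_e` for `0 ≤ e`,
whose component at `a` is `U` applied to `a ≤ a + e`. -/
def sigmaNat {C : Type*} [Category C] (U : ℝ ⥤ C) (e : ℝ) (he : 0 ≤ e) :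
    U ⟶ Tr e ⋙ U where
  app a := U.map (homOfLE (le_add_of_nonneg_right he))
  naturality a b f := by
    dsimp [Tr]
    rw [← Functor.map_comp, ← Functor.map_comp]
    exact congrArg U.map (Subsingleton.elim _ _)

/-- `(Φ, Ψ)` is an `e`-interleaving of `U` and `V`:
`(Ψ whiskered by T_e) ∘ Φ = U σ_{2e}` and `(Φ whiskered by T_e) ∘ Ψ = V σ_{2e}`
(the `eqToHom` transports along the equality of functors `T_{2e} = T_e ⋙ T_e`). -/
def IsInterleaving {C : Type*} [Category C] (e : ℝ) (he : 0 ≤ e) (U V : ℝ ⥤ C)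
    (Φ : U ⟶ Tr e ⋙ V) (Ψ : V ⟶ Tr e ⋙ U) : Prop :=
  Φ ≫ Functor.whiskerLeft (Tr e) Ψ =
      sigmaNat U (2 * e) (by linarith) ≫ eqToHom (by rw [two_mul, ← Tr_comp, Functor.assoc]) ∧
    Ψ ≫ Functor.whiskerLeft (Tr e) Φ =
      sigmaNat V (2 * e) (by linarith) ≫ eqToHom (by rw [two_mul, ← Tr_comp, Functor.assoc])

/-- `U` and `V` are `e`-interleaved. -/
def Interleaved {C : Type*} [Category C] (e : ℝ) (U V : ℝ ⥤ C) : Prop :=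
  ∃ (he : 0 ≤ e) (Φ : U ⟶ Tr e ⋙ V) (Ψ : V ⟶ Tr e ⋙ U), IsInterleaving e he U V Φ Ψ

/-- The interleaving distance: the infimum in `[0,∞]` of the set of `e ≥ 0` such that
`U` and `V` are `e`-interleaved (`∞` if this set is empty). -/
noncomputable def dInt {C : Type*} [Category C] (U V : ℝ ⥤ C) : ENNReal :=
  sInf (ENNReal.ofReal '' {e : ℝ | Interleaved e U V})

lemma eqToHom_eq_map {C : Type*} [Category C] (F : ℝ ⥤ C) {x y : ℝ} (h : x = y)
    (p : F.obj x = F.obj y) : eqToHom p = F.map (homOfLE h.le) := by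
  subst h; simp

/-- Composition of interleavings: if `(Φ₁, Ψ₁)` is an `e`-interleaving of `U` and `V`
and `(Φ₂, Ψ₂)` is an `f`-interleaving of `V` and `W`, then
`(Φ₂ whiskered by T_e) ∘ Φ₁` and `(Ψ₁ whiskered by T_f) ∘ Ψ₂` form an
`(e+f)`-interleaving of `U` and `W` (the `eqToHom`s transport along the equalities
`T_e ⋙ T_f = T_{e+f}` and `T_f ⋙ T_e = T_{e+f}`). -/
theorem interleaving_comp {C : Type*} [Category C] (U V W : ℝ ⥤ C) (e f : ℝ)
    (he : 0 ≤ e) (hf : 0 ≤ f)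
    (Φ₁ : U ⟶ Tr e ⋙ V) (Ψ₁ : V ⟶ Tr e ⋙ U)
    (Φ₂ : V ⟶ Tr f ⋙ W) (Ψ₂ : W ⟶ Tr f ⋙ V)
    (h₁ : IsInterleaving e he U V Φ₁ Ψ₁) (h₂ : IsInterleaving f hf V W Φ₂ Ψ₂) :
    IsInterleaving (e + f) (by linarith) U W
      (Φ₁ ≫ Functor.whiskerLeft (Tr e) Φ₂ ≫ eqToHom (by rw [← Tr_comp, Functor.assoc]))
      (Ψ₂ ≫ Functor.whiskerLeft (Tr f) Ψ₁ ≫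
        eqToHom (by rw [show e + f = f + e from add_comm e f, ← Tr_comp, Functor.assoc])) := by
  obtain ⟨h1a, h1b⟩ := h₁
  obtain ⟨h2a, h2b⟩ := h₂
  constructor
  · ext a
    have c2 := NatTrans.congr_app h2a (a + e)
    have c1 := NatTrans.congr_app h1a a
    simp only [NatTrans.comp_app, Functor.whiskerLeft_app, Functor.comp_obj, Tr_obj, eqToHom_app,
      sigmaNat, Category.assoc] at c1 c2 ⊢
    erw [eqToHom_eq_map W (by simp only [Tr_obj]; ring),
      eqToHom_eq_map U (by simp only [Tr_obj]; ring),
      eqToHom_eq_map U (by simp only [Tr_obj]; ring)]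
    erw [eqToHom_eq_map V (by simp only [Tr_obj]; ring)] at c2
    erw [eqToHom_eq_map U (by simp only [Tr_obj]; ring)] at c1
    simp only [Tr_obj] at c1 c2 ⊢
    erw [Ψ₂.naturality_assoc, ← Category.assoc (Φ₂.app _), c2, Category.assoc]
    simp only [Functor.comp_map, ← Functor.map_comp_assoc]
    simp only [Tr_obj]
    erw [← V.map_comp_assoc, ← V.map_comp_assoc, Ψ₁.naturality_assoc, ← Category.assoc (Φ₁.app _), c1, Category.assoc]
    simp only [Functor.comp_map, ← Functor.map_comp, Category.assoc]
    erw [← U.map_comp, ← U.map_comp, ← U.map_comp]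
    exact congrArg U.map (Subsingleton.elim _ _)
  · ext a
    have c2 := NatTrans.congr_app h2b a
    have c1 := NatTrans.congr_app h1b (a + f)
    simp only [NatTrans.comp_app, Functor.whiskerLeft_app, Functor.comp_obj, Tr_obj, eqToHom_app,
      sigmaNat, Category.assoc] at c1 c2 ⊢
    erw [eqToHom_eq_map U (by simp only [Tr_obj]; ring),
      eqToHom_eq_map W (by simp only [Tr_obj]; ring),
      eqToHom_eq_map W (by simp only [Tr_obj]; ring)]
    erw [eqToHom_eq_map V (by simp only [Tr_obj]; ring)] at c1
    erw [eqToHom_eq_map W (by simp only [Tr_obj]; ring)] at c2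
    simp only [Tr_obj] at c1 c2 ⊢
    erw [Φ₁.naturality_assoc, ← Category.assoc (Ψ₁.app _), c1, Category.assoc]
    simp only [Functor.comp_map, ← Functor.map_comp_assoc]
    simp only [Tr_obj]
    erw [← V.map_comp_assoc, ← V.map_comp_assoc, Φ₂.naturality_assoc, ← Category.assoc (Ψ₂.app _), c2, Category.assoc]
    simp only [Functor.comp_map, ← Functor.map_comp, Category.assoc]
    erw [← W.map_comp, ← W.map_comp, ← W.map_comp]
    exact congrArg W.map (Subsingleton.elim _ _)

end
end

section
/- For any category C, the interleaving distance d_Int is an extended pseudometric on functors ℝ ⥤ C: for all U, V, W : ℝ ⥤ C one has d_Int(U, U) = 0, d_Int(U, V) = d_Int(V, U), and d_Int(U, W) ≤ d_Int(U, V) + d_Int(V, W). -/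
open CategoryTheory CategoryTheory.Limits

noncomputable section

theorem map_comp_eqToHom {C : Type*} [Category C] (U : ℝ ⥤ C) {x y z : ℝ} (hxy : x ≤ y)
    (hyz : y = z) (hxz : x ≤ z) :
    U.map (homOfLE hxy) ≫ eqToHom (congrArg U.obj hyz) = U.map (homOfLE hxz) := by
  subst hyz; rw [eqToHom_refl, Category.comp_id]

theorem sigma_comp_eqToHom_app {C : Type*} [Category C] (U : ℝ ⥤ C) (e : ℝ) (he : 0 ≤ e)
    {F : ℝ ⥤ C} (h : Tr (2*e) ⋙ U = F) (a : ℝ)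
    (q : (Tr (2*e) ⋙ U).obj a = F.obj a) :
    (sigmaNat U (2*e) (by linarith) ≫ eqToHom h).app a =
      U.map (homOfLE (by linarith : a ≤ a + 2*e)) ≫ eqToHom q := by
  subst h; simp [sigmaNat]

theorem eqToHom_comp_app {C : Type*} [Category C] {F G : ℝ ⥤ C} (α : F ⟶ G) {x y : ℝ}
    (h : x = y) (p : F.obj x = F.obj y) (q : G.obj x = G.obj y) :
    eqToHom p ≫ α.app y = α.app x ≫ eqToHom q := by subst h; simp

theorem isInterleaving_iff {C : Type*} [Category C] {e : ℝ} (he : 0 ≤ e) (U V : ℝ ⥤ C)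
    (Φ : U ⟶ Tr e ⋙ V) (Ψ : V ⟶ Tr e ⋙ U) :
    IsInterleaving e he U V Φ Ψ ↔
      ((∀ a : ℝ, Φ.app a ≫ Ψ.app (a + e) = U.map (homOfLE (by linarith : a ≤ a + e + e))) ∧
       (∀ a : ℝ, Ψ.app a ≫ Φ.app (a + e) = V.map (homOfLE (by linarith : a ≤ a + e + e)))) := by
  have key : ∀ (A B : ℝ ⥤ C) (α : A ⟶ Tr e ⋙ B) (β : B ⟶ Tr e ⋙ A)
      (h : Tr (2*e) ⋙ A = Tr e ⋙ Tr e ⋙ A),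
      (α ≫ Functor.whiskerLeft (Tr e) β = sigmaNat A (2*e) (by linarith) ≫ eqToHom h) ↔
      (∀ a : ℝ, α.app a ≫ β.app (a + e) = A.map (homOfLE (by linarith : a ≤ a + e + e))) := by
    intro A B α β h
    constructor
    · intro hh a
      have := NatTrans.congr_app hh a
      rw [sigma_comp_eqToHom_app A e he h a (Functor.congr_obj h a)] at this
      simp only [NatTrans.comp_app, Functor.whiskerLeft_app] at this
      exact this.trans (map_comp_eqToHom A _ (show a + 2*e = a + e + e by ring) (by linarith))
    · intro hh
      ext a
      rw [sigma_comp_eqToHom_app A e he h a (Functor.congr_obj h a)]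
      simp only [NatTrans.comp_app, Functor.whiskerLeft_app]
      exact (hh a).trans (map_comp_eqToHom A _ (show a + 2*e = a + e + e by ring) (by linarith)).symm
  exact and_congr (key U V Φ Ψ _) (key V U Ψ Φ _)

theorem close_chain {C : Type*} [Category C] (U : ℝ ⥤ C) {x y z w : ℝ} (g1 : x ⟶ y) (g2 : y ⟶ z)
    (h : z = w) (hxw : x ≤ w) :
    U.map g1 ≫ U.map g2 ≫ eqToHom (congrArg U.obj h) = U.map (homOfLE hxw) := by
  subst h
  rw [eqToHom_refl, Category.comp_id, ← Functor.map_comp]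
  exact congrArg U.map (Subsingleton.elim _ _)

theorem comp_component {C : Type*} [Category C] {e f : ℝ} (he : 0 ≤ e) (hf : 0 ≤ f)
    {U V W : ℝ ⥤ C} (Φ1 : U ⟶ Tr e ⋙ V) (Φ2 : V ⟶ Tr f ⋙ W)
    (Ψ1 : V ⟶ Tr e ⋙ U) (Ψ2 : W ⟶ Tr f ⋙ V)
    (hU1 : ∀ x : ℝ, Φ1.app x ≫ Ψ1.app (x + e) = U.map (homOfLE (by linarith : x ≤ x + e + e)))
    (hV2 : ∀ x : ℝ, Φ2.app x ≫ Ψ2.app (x + f) = V.map (homOfLE (by linarith : x ≤ x + f + f)))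
    (a g : ℝ) (hg : g = e + f) (hp : a + e + f = a + g) (hq : a + g + f + e = a + g + g) :
    (Φ1.app a ≫ Φ2.app (a + e) ≫ eqToHom (congrArg W.obj hp)) ≫
      (Ψ2.app (a + g) ≫ Ψ1.app (a + g + f) ≫ eqToHom (congrArg U.obj hq)) =
      U.map (homOfLE (by rw [hg] at *; linarith : a ≤ a + g + g)) := by
  subst hg
  have h2 : a + e + f + f = a + (e + f) + f := by rw [hp]
  have s1 : eqToHom (congrArg W.obj hp) ≫ Ψ2.app (a + (e + f)) =
      Ψ2.app (a + e + f) ≫ eqToHom (congrArg (fun x => V.obj (x + f)) hp) :=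
    eqToHom_comp_app Ψ2 hp _ _
  have s2 : eqToHom (congrArg (fun x => V.obj (x + f)) hp) ≫ Ψ1.app (a + (e + f) + f) =
      Ψ1.app (a + e + f + f) ≫ eqToHom (congrArg (fun x => U.obj (x + e)) h2) :=
    eqToHom_comp_app Ψ1 h2 _ _
  simp only [Category.assoc]
  erw [Category.assoc, reassoc_of% s1]
  erw [Category.assoc, reassoc_of% s2]
  erw [← Category.assoc (Φ2.app (a + e)), hV2 (a + e)]
  erw [Category.assoc (Ψ1.app _)]
  erw [← Category.assoc (V.map _), Ψ1.naturality (homOfLE (show a + e ≤ a + e + f + f by linarith))]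
  erw [← Category.assoc (Φ1.app a), ← Category.assoc (Φ1.app a), hU1 a]
  erw [Category.assoc]
  simp only [Functor.comp_map, eqToHom_trans]
  erw [eqToHom_trans]
  exact close_chain U _ _ (show (Tr e).obj (a+e+f+f) = a+(e+f)+(e+f) by simp only [Tr_obj]; ring) _

theorem interleaved_refl {C : Type*} [Category C] (U : ℝ ⥤ C) {e : ℝ} (he : 0 ≤ e) :
    Interleaved e U U := by
  refine ⟨he, sigmaNat U e he, sigmaNat U e he, ?_⟩
  rw [isInterleaving_iff he]
  constructor <;> intro a <;>
    (dsimp [sigmaNat]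
     rw [← Functor.map_comp]
     exact congrArg U.map (Subsingleton.elim _ _))

theorem interleaved_symm {C : Type*} [Category C] {U V : ℝ ⥤ C} {e : ℝ}
    (h : Interleaved e U V) : Interleaved e V U := by
  obtain ⟨he, Φ, Ψ, h1, h2⟩ := h
  exact ⟨he, Ψ, Φ, h2, h1⟩

theorem interleaved_trans {C : Type*} [Category C] {U V W : ℝ ⥤ C} {e f : ℝ}
    (h1 : Interleaved e U V) (h2 : Interleaved f V W) : Interleaved (e + f) U W := by
  obtain ⟨he, Φ1, Ψ1, H1⟩ := h1
  obtain ⟨hf, Φ2, Ψ2, H2⟩ := h2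
  rw [isInterleaving_iff he] at H1
  rw [isInterleaving_iff hf] at H2
  obtain ⟨hU1, hV1⟩ := H1
  obtain ⟨hV2, hW2⟩ := H2
  refine ⟨by linarith, Φ1 ≫ Functor.whiskerLeft (Tr e) Φ2 ≫ eqToHom (by rw [← Functor.assoc, Tr_comp]),
    Ψ2 ≫ Functor.whiskerLeft (Tr f) Ψ1 ≫ eqToHom (by rw [← Functor.assoc, Tr_comp, add_comm f e]), ?_⟩
  rw [isInterleaving_iff (by linarith : (0:ℝ) ≤ e + f)]
  constructor <;> intro a
  · simp only [NatTrans.comp_app, Functor.whiskerLeft_app, eqToHom_app, Category.assoc]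
    have := comp_component he hf Φ1 Φ2 Ψ1 Ψ2 hU1 hV2 a (e + f) rfl (by ring) (by ring)
    dsimp only [Functor.comp_obj, Tr_obj] at this ⊢
    simpa only [Category.assoc] using this
  · simp only [NatTrans.comp_app, Functor.whiskerLeft_app, eqToHom_app, Category.assoc]
    have := comp_component (U := W) (V := V) (W := U) hf he Ψ2 Ψ1 Φ2 Φ1 hW2 hV1 a (e + f) (add_comm e f) (by ring) (by ring)
    dsimp only [Functor.comp_obj, Tr_obj] at this ⊢
    simpa only [Category.assoc] using this


/-- The interleaving distance is an extended pseudometric on functors `ℝ ⥤ C`: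
it is reflexive (`dInt U U = 0`), symmetric, and satisfies the triangle inequality. -/
theorem dInt_pseudometric {C : Type*} [Category C] (U V W : ℝ ⥤ C) :
    dInt U U = 0 ∧ dInt U V = dInt V U ∧ dInt U W ≤ dInt U V + dInt V W := by
  refine ⟨?_, ?_, ?_⟩
  · refine le_antisymm ?_ zero_le
    have : dInt U U ≤ ENNReal.ofReal 0 :=
      sInf_le ⟨0, interleaved_refl U le_rfl, rfl⟩
    simpa using this
  · have hset : {e : ℝ | Interleaved e U V} = {e : ℝ | Interleaved e V U} :=
      Set.ext fun e => ⟨interleaved_symm, interleaved_symm⟩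
    rw [dInt, dInt, hset]
  · show dInt U W ≤ sInf _ + sInf _
    rw [ENNReal.sInf_add]
    refine le_iInf₂ fun b hb => ?_
    rw [add_comm b, ENNReal.sInf_add]
    refine le_iInf₂ fun c hc => ?_
    rw [add_comm c b]
    obtain ⟨x, hx, rfl⟩ := hb
    obtain ⟨y, hy, rfl⟩ := hc
    have hx0 : 0 ≤ x := hx.1
    have hy0 : 0 ≤ y := hy.1
    calc dInt U W
        ≤ ENNReal.ofReal (x + y) := sInf_le ⟨x + y, interleaved_trans hx hy, rfl⟩
      _ = ENNReal.ofReal x + ENNReal.ofReal y := ENNReal.ofReal_add hx0 hy0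

end
end

section
/- Let M be a pseudometric space, C a category, and G : spacetime(M) ⥤ C any functor. Then the map sending x ∈ M to the functor G ∘ η(x) : ℝ ⥤ C is 1-Lipschitz with respect to the interleaving distance: d_Int(G ∘ η(x), G ∘ η(y)) ≤ dist x y for all x, y ∈ M. In particular, every coherent map into the space of functors ℝ ⥤ C is 1-Lipschitz. -/
open CategoryTheory CategoryTheory.Limits

noncomputable section

/-- The spacetime of a pseudometric space `M`: the set `M × ℝ` (encoded as a structure
with a point component and a time component). -/
@[ext] structure Spacetime (M : Type*) [PseudoMetricSpace M] where
  pos : M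
  time : ℝ

/-- The spacetime preorder: `(x,s) ≤ (y,t)` iff `dist x y ≤ t - s`. -/
instance Spacetime.instPreorder (M : Type*) [PseudoMetricSpace M] :
    Preorder (Spacetime M) where
  le p q := dist p.pos q.pos ≤ q.time - p.time
  le_refl p := by simp
  le_trans p q r h₁ h₂ := by
    have h := dist_triangle p.pos q.pos r.pos
    try simp only [] at *
    linarith

theorem Spacetime.le_def {M : Type*} [PseudoMetricSpace M] (p q : Spacetime M) :
    p ≤ q ↔ dist p.pos q.pos ≤ q.time - p.time := Iff.rfl

/-- The constant world line `η(x) : ℝ ⥤ Spacetime M` of a point `x`, i.e. the functor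
induced by the monotone map `s ↦ (x, s)`. -/
def eta {M : Type*} [PseudoMetricSpace M] (x : M) : ℝ ⥤ Spacetime M :=
  Monotone.functor (f := fun s : ℝ => (⟨x, s⟩ : Spacetime M))
    (fun a b h => show dist x x ≤ b - a by rw [dist_self]; linarith)

/-- Morphism in spacetime from `(x,a)` to `(y, a+e)` when `dist x y ≤ e`. -/
def stHom {M : Type*} [PseudoMetricSpace M] {x y : M} {a b : ℝ}
    (h : dist x y ≤ b - a) : (⟨x, a⟩ : Spacetime M) ⟶ ⟨y, b⟩ :=
  homOfLE ((Spacetime.le_def _ _).mpr h)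

def etaTrans {M : Type*} [PseudoMetricSpace M] {C : Type*} [Category C]
    (G : Spacetime M ⥤ C) {u v : M} {e : ℝ} (h : dist u v ≤ e) :
    (eta u ⋙ G) ⟶ Tr e ⋙ (eta v ⋙ G) where
  app a := G.map (stHom (show dist u v ≤ (a + e) - a by linarith))
  naturality a b f := by
    dsimp [Tr, eta, Monotone.functor]
    rw [← Functor.map_comp, ← Functor.map_comp]
    exact congrArg G.map (Subsingleton.elim _ _)

@[simp] lemma etaTrans_app {M : Type*} [PseudoMetricSpace M] {C : Type*} [Category C]
    (G : Spacetime M ⥤ C) {u v : M} {e : ℝ} (h : dist u v ≤ e) (a : ℝ) :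
    (etaTrans G h).app a = G.map (stHom (show dist u v ≤ (a + e) - a by linarith)) := rfl

lemma interleaved_eta {M : Type*} [PseudoMetricSpace M]
    {C : Type*} [Category C] (G : Spacetime M ⥤ C) (x y : M) :
    Interleaved (dist x y) (eta x ⋙ G) (eta y ⋙ G) := by
  refine ⟨dist_nonneg, etaTrans G le_rfl, etaTrans G (dist_comm y x).le, ?_, ?_⟩ <;>
  · ext a
    simp only [NatTrans.comp_app, Functor.whiskerLeft_app, etaTrans_app, sigmaNat, eqToHom_app,
      Functor.comp_map, Tr_obj]
    erw [← eqToHom_map G (show (⟨_, a + 2 * dist x y⟩ : Spacetime M) = ⟨_, a + dist x y + dist x y⟩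
        by rw [two_mul, ← add_assoc]),
      ← Functor.map_comp, ← Functor.map_comp]
    exact congrArg G.map (Subsingleton.elim _ _)

lemma dInt_eta_le {M : Type*} [PseudoMetricSpace M]
    {C : Type*} [Category C] (G : Spacetime M ⥤ C) (x y : M) :
    dInt (eta x ⋙ G) (eta y ⋙ G) ≤ ENNReal.ofReal (dist x y) :=
  sInf_le ⟨dist x y, interleaved_eta G x y, rfl⟩

/-- For any functor `G : Spacetime M ⥤ C`, the map `x ↦ G ∘ η(x)` is 1-Lipschitz for the
interleaving distance; in particular every coherent map into the space of functors
`ℝ ⥤ C` is 1-Lipschitz. -/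
theorem coherent_is_one_lipschitz {M : Type*} [PseudoMetricSpace M]
    {C : Type*} [Category C] (G : Spacetime M ⥤ C) :
    (∀ x y : M, dInt (eta x ⋙ G) (eta y ⋙ G) ≤ ENNReal.ofReal (dist x y)) ∧
      ∀ g : M → ℝ ⥤ C, (∃ G' : Spacetime M ⥤ C, ∀ x : M, g x = eta x ⋙ G') →
        ∀ x y : M, dInt (g x) (g y) ≤ ENNReal.ofReal (dist x y) := by
  refine ⟨dInt_eta_le G, ?_⟩
  rintro g ⟨G', hG'⟩ x y
  rw [hG' x, hG' y]
  exact dInt_eta_le G' x y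

end
end
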